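/- arXiv:2512.17761 — 8 statements merged into one kernel-verified Lean document; each statement's English description precedes it below -/
import Mathlib

section
/- For the multigeometric sequence (1, 2\sqrt2 - 2; q) with q = (2-\sqrt2)/2, i.e., a_{2n-1} = q^n and a_{2n} = (2\sqrt2-2) q^n, we have r_{2n} < a_{2n} for all n \ge 1, where r_k = \sum_{i>k} a_i. -/
/-- For the multigeometric sequence `(1, 2√2 - 2; q)` with `q = (2-√2)/2`,
we have `r (2n) < a (2n)` for all `n ≥ 1`. -/
theorem stmt2 (q : ℝ) (hq : q = (2 - Real.sqrt 2) / 2) (a : ℕ → ℝ) (hsum : Summable a)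
    (hodd : ∀ n : ℕ, 1 ≤ n → a (2 * n - 1) = q ^ n)
    (heven : ∀ n : ℕ, 1 ≤ n → a (2 * n) = (2 * Real.sqrt 2 - 2) * q ^ n) :
    ∀ n : ℕ, 1 ≤ n → (∑' k : ℕ, a (2 * n + 1 + k)) < a (2 * n) := by
  intro n hn
  have s2 : Real.sqrt 2 ^ 2 = 2 := Real.sq_sqrt (by norm_num)
  have s2nn : 0 ≤ Real.sqrt 2 := Real.sqrt_nonneg 2
  have s2gt : Real.sqrt 2 > 7/5 := by nlinarith
  have s2lt : Real.sqrt 2 < 3/2 := by nlinarith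
  have hq0 : 0 < q := by rw [hq]; nlinarith
  have hq1 : q < 1 := by rw [hq]; nlinarith
  have hoddv : ∀ j : ℕ, a (2*n+1+2*j) = q^(n+1+j) := by
    intro j
    have h := hodd (n+j+1) (by omega)
    rw [show 2*(n+j+1)-1 = 2*n+1+2*j by omega] at h
    rw [h]; ring_nf
  have hevenv : ∀ j : ℕ, a (2*n+1+(2*j+1)) = (2*Real.sqrt 2 - 2) * q^(n+1+j) := by
    intro j
    have h := heven (n+j+1) (by omega)
    rw [show 2*(n+j+1) = 2*n+1+(2*j+1) by omega] at h
    rw [h]; ring_nf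
  have hse : Summable (fun j : ℕ => a (2*n+1+2*j)) :=
    hsum.comp_injective (fun x y h => by omega)
  have hso : Summable (fun j : ℕ => a (2*n+1+(2*j+1))) :=
    hsum.comp_injective (fun x y h => by omega)
  have hg : ∑' j : ℕ, q^j = (1-q)⁻¹ := tsum_geometric_of_lt_one hq0.le hq1
  have h1 : ∑' j : ℕ, a (2*n+1+2*j) = q^(n+1) * (1-q)⁻¹ := by
    calc ∑' j : ℕ, a (2*n+1+2*j) = ∑' j : ℕ, q^(n+1) * q^j := by
          exact tsum_congr fun j => by rw [hoddv j, pow_add]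
      _ = q^(n+1) * (1-q)⁻¹ := by rw [tsum_mul_left, hg]
  have h2 : ∑' j : ℕ, a (2*n+1+(2*j+1)) = (2*Real.sqrt 2 - 2) * (q^(n+1) * (1-q)⁻¹) := by
    calc ∑' j : ℕ, a (2*n+1+(2*j+1))
        = ∑' j : ℕ, ((2*Real.sqrt 2 - 2) * q^(n+1)) * q^j := by
          exact tsum_congr fun j => by rw [hevenv j, pow_add]; ring
      _ = _ := by rw [tsum_mul_left, hg]; ring
  have key : (∑' k : ℕ, a (2 * n + 1 + k))
      = q^(n+1) * (1-q)⁻¹ + (2*Real.sqrt 2 - 2) * (q^(n+1) * (1-q)⁻¹) := by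
    have h := tsum_even_add_odd (f := fun k => a (2*n+1+k)) hse hso
    rw [h1, h2] at h
    exact h.symm
  have hinv : (1-q)⁻¹ = Real.sqrt 2 := by
    have hs0 : Real.sqrt 2 ≠ 0 := by nlinarith
    rw [hq, show (1:ℝ) - (2 - Real.sqrt 2)/2 = Real.sqrt 2 / 2 by ring, inv_div,
      div_eq_iff hs0]
    nlinarith
  rw [key, heven n hn, hinv, pow_succ]
  have hc : q*Real.sqrt 2 + (2*Real.sqrt 2-2)*(q*Real.sqrt 2) < 2*Real.sqrt 2 - 2 := by
    rw [hq]; nlinarith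
  nlinarith [mul_lt_mul_of_pos_left hc (pow_pos hq0 n)]
end

section
/- For the multigeometric sequence (1, 2\sqrt2 - 2; q) with q = (2-\sqrt2)/2, we have r_{2n-1} > a_{2n-1} for all n \ge 1, where r_k = \sum_{i>k} a_i. -/
set_option maxHeartbeats 1000000

/-- For the multigeometric sequence `(1, 2√2 - 2; q)` with `q = (2-√2)/2`,
we have `r (2n-1) > a (2n-1)` for all `n ≥ 1`. -/
theorem stmt3 (q : ℝ) (hq : q = (2 - Real.sqrt 2) / 2) (a : ℕ → ℝ) (hsum : Summable a)
    (hodd : ∀ n : ℕ, 1 ≤ n → a (2 * n - 1) = q ^ n)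
    (heven : ∀ n : ℕ, 1 ≤ n → a (2 * n) = (2 * Real.sqrt 2 - 2) * q ^ n) :
    ∀ n : ℕ, 1 ≤ n → (∑' k : ℕ, a (2 * n + k)) > a (2 * n - 1) := by
  intro n hn
  have hs2 : Real.sqrt 2 ^ 2 = 2 := Real.sq_sqrt (by norm_num)
  have h1 : 1 < Real.sqrt 2 := by nlinarith [Real.sqrt_nonneg 2]
  have h2 : Real.sqrt 2 < 2 := by nlinarith [Real.sqrt_nonneg 2]
  have hq0 : 0 < q := by rw [hq]; linarith
  have hq1 : q < 1 := by rw [hq]; linarith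
  have hg : Summable (fun k : ℕ => q ^ k) := summable_geometric_of_lt_one hq0.le hq1
  have he : ∀ k, a (2 * n + 2 * k) = ((2 * Real.sqrt 2 - 2) * q ^ n) * q ^ k := by
    intro k
    have h := heven (n + k) (by omega)
    have hi : 2 * n + 2 * k = 2 * (n + k) := by ring
    rw [hi, h, pow_add]; ring
  have ho : ∀ k, a (2 * n + (2 * k + 1)) = (q ^ (n + 1)) * q ^ k := by
    intro k
    have h := hodd (n + k + 1) (by omega)
    have hi : 2 * n + (2 * k + 1) = 2 * (n + k + 1) - 1 := by omega
    rw [hi, h]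
    rw [show n + k + 1 = (n + 1) + k by ring, pow_add]
  have hse : Summable (fun k : ℕ => a (2 * n + 2 * k)) := by
    simpa [he] using hg.mul_left ((2 * Real.sqrt 2 - 2) * q ^ n)
  have hso : Summable (fun k : ℕ => a (2 * n + (2 * k + 1))) := by
    simpa [ho] using hg.mul_left (q ^ (n + 1))
  have key := tsum_even_add_odd (f := fun k => a (2 * n + k)) hse hso
  have hge : ∑' k : ℕ, a (2 * n + 2 * k) = ((2 * Real.sqrt 2 - 2) * q ^ n) * (1 - q)⁻¹ := by
    rw [tsum_congr he, tsum_mul_left, tsum_geometric_of_lt_one hq0.le hq1]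
  have hgo : ∑' k : ℕ, a (2 * n + (2 * k + 1)) = (q ^ (n + 1)) * (1 - q)⁻¹ := by
    rw [tsum_congr ho, tsum_mul_left, tsum_geometric_of_lt_one hq0.le hq1]
  rw [hge, hgo] at key
  rw [← key, hodd n hn]
  have hqn : 0 < q ^ n := pow_pos hq0 n
  have h1q : 0 < 1 - q := by linarith
  rw [gt_iff_lt, ← sub_pos]
  have : (2 * Real.sqrt 2 - 2) * q ^ n * (1 - q)⁻¹ + q ^ (n + 1) * (1 - q)⁻¹ - q ^ n
      = q ^ n * ((2 * Real.sqrt 2 - 2) + q - (1 - q)) * (1 - q)⁻¹ := by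
    field_simp
    ring
  rw [this]
  have hkey : (2 * Real.sqrt 2 - 2) + q - (1 - q) = Real.sqrt 2 - 1 := by
    rw [hq]; ring
  rw [hkey]
  exact mul_pos (mul_pos hqn (by linarith)) (inv_pos.mpr h1q)
end

section
/- For the multigeometric sequence (4,3,2;q) with q \in [1/6, 2/11), we have r_{3n-1} > a_{3n-1} and r_{3n-2} > a_{3n-2} for all n \ge 1. -/
/-- For the multigeometric sequence `(4,3,2;q)` with `q ∈ [1/6, 2/11)`,
we have `r (3n-1) > a (3n-1)` and `r (3n-2) > a (3n-2)` for all `n ≥ 1`. -/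
theorem stmt6 (q : ℝ) (hq : q ∈ Set.Ico (1/6 : ℝ) (2/11)) (a : ℕ → ℝ) (hsum : Summable a)
    (h1 : ∀ n : ℕ, 1 ≤ n → a (3 * n - 2) = 4 * q ^ n)
    (h2 : ∀ n : ℕ, 1 ≤ n → a (3 * n - 1) = 3 * q ^ n)
    (h3 : ∀ n : ℕ, 1 ≤ n → a (3 * n) = 2 * q ^ n) :
    ∀ n : ℕ, 1 ≤ n →
      (∑' k : ℕ, a (3 * n + k)) > a (3 * n - 1) ∧
      (∑' k : ℕ, a (3 * n - 1 + k)) > a (3 * n - 2) := by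
  obtain ⟨hq1, hq2⟩ := hq
  have hqpos : 0 < q := by linarith
  have hnn : ∀ m : ℕ, 2 ≤ m → 0 ≤ a m := by
    intro m hm
    obtain ⟨n, hn, hcase⟩ : ∃ n, 1 ≤ n ∧ (m = 3*n-2 ∨ m = 3*n-1 ∨ m = 3*n) :=
      ⟨(m+2)/3, by omega, by omega⟩
    rcases hcase with h | h | h <;> subst h
    · rw [h1 n hn]; positivity
    · rw [h2 n hn]; positivity
    · rw [h3 n hn]; positivity
  intro n hn
  have hqn : 0 < q ^ n := pow_pos hqpos n
  constructor
  · have hs : Summable (fun k => a (3 * n + k)) :=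
      hsum.comp_injective (add_right_injective (3 * n))
    have hle : ∑ k ∈ Finset.range 3, a (3 * n + k) ≤ ∑' k : ℕ, a (3 * n + k) := by
      apply Summable.sum_le_tsum _ _ hs
      intro k hk
      exact hnn _ (by omega)
    have e0 : a (3 * n + 0) = 2 * q ^ n := by
      rw [show 3 * n + 0 = 3 * n from rfl]; exact h3 n hn
    have e1 : a (3 * n + 1) = 4 * q ^ (n + 1) := by
      rw [show 3 * n + 1 = 3 * (n + 1) - 2 by omega]; exact h1 (n + 1) (by omega)
    have e2 : a (3 * n + 2) = 3 * q ^ (n + 1) := by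
      rw [show 3 * n + 2 = 3 * (n + 1) - 1 by omega]; exact h2 (n + 1) (by omega)
    have hsum3 : ∑ k ∈ Finset.range 3, a (3 * n + k) = 2 * q ^ n + 7 * q ^ (n + 1) := by
      rw [Finset.sum_range_succ, Finset.sum_range_succ, Finset.sum_range_one, e0, e1, e2]
      ring
    rw [h2 n hn]
    have : (3 : ℝ) * q ^ n < 2 * q ^ n + 7 * q ^ (n + 1) := by
      have : q ^ (n + 1) = q * q ^ n := by ring
      rw [this]; nlinarith
    linarith [hle, hsum3 ▸ hle]
  · have hs : Summable (fun k => a (3 * n - 1 + k)) :=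
      hsum.comp_injective (add_right_injective (3 * n - 1))
    have hle : ∑ k ∈ Finset.range 2, a (3 * n - 1 + k) ≤ ∑' k : ℕ, a (3 * n - 1 + k) := by
      apply Summable.sum_le_tsum _ _ hs
      intro k hk
      exact hnn _ (by omega)
    have e0 : a (3 * n - 1 + 0) = 3 * q ^ n := by
      rw [show 3 * n - 1 + 0 = 3 * n - 1 by omega]; exact h2 n hn
    have e1 : a (3 * n - 1 + 1) = 2 * q ^ n := by
      rw [show 3 * n - 1 + 1 = 3 * n by omega]; exact h3 n hn
    have hsum2 : ∑ k ∈ Finset.range 2, a (3 * n - 1 + k) = 5 * q ^ n := by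
      rw [Finset.sum_range_succ, Finset.sum_range_one, e0, e1]; ring
    rw [h1 n hn]
    have : (4 : ℝ) * q ^ n < 5 * q ^ n := by nlinarith
    linarith [hsum2 ▸ hle]
end

section
/- Let q = (\sqrt{57}-5)/16 and consider the sequence (4,3,2;q): a_{3n-2}=4q^n, a_{3n-1}=3q^n, a_{3n}=2q^n. Then r_{3n} < a_{3n}, r_{3n-1} > a_{3n-1}, and r_{3n-2} > a_{3n-2} for all n \ge 1, where r_k = \sum_{i>k} a_i. -/
/-- For the multigeometric sequence `(4,3,2;q)` with `q = (√57-5)/16`, for all `n ≥ 1`: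
`r (3n) < a (3n)`, `r (3n-1) > a (3n-1)` and `r (3n-2) > a (3n-2)`. -/
theorem stmt10 (q : ℝ) (hq : q = (Real.sqrt 57 - 5) / 16) (a : ℕ → ℝ) (hsum : Summable a)
    (h1 : ∀ n : ℕ, 1 ≤ n → a (3 * n - 2) = 4 * q ^ n)
    (h2 : ∀ n : ℕ, 1 ≤ n → a (3 * n - 1) = 3 * q ^ n)
    (h3 : ∀ n : ℕ, 1 ≤ n → a (3 * n) = 2 * q ^ n) :
    ∀ n : ℕ, 1 ≤ n →
      (∑' k : ℕ, a (3 * n + 1 + k)) < a (3 * n) ∧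
      (∑' k : ℕ, a (3 * n + k)) > a (3 * n - 1) ∧
      (∑' k : ℕ, a (3 * n - 1 + k)) > a (3 * n - 2) := by
  -- numeric bounds on q
  have h57 : Real.sqrt 57 ^ 2 = 57 := Real.sq_sqrt (by norm_num)
  have hsn : 0 ≤ Real.sqrt 57 := Real.sqrt_nonneg 57
  have hs1 : (33 / 5 : ℝ) < Real.sqrt 57 := by nlinarith
  have hs2 : Real.sqrt 57 < 87 / 11 := by nlinarith
  have hq0 : (1/10 : ℝ) < q := by rw [hq]; linarith
  have hq1 : q < 2/11 := by rw [hq]; linarith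
  have hq0' : 0 < q := by linarith
  have hq1' : q < 1 := by linarith
  have h1q : 0 < 1 - q := by linarith
  have hcpos : 0 < (1 - q)⁻¹ := inv_pos.2 h1q
  have hc : (1 - q) * (1 - q)⁻¹ = 1 := mul_inv_cancel₀ (by linarith)
  -- geometric sum
  have hgeo : HasSum (fun m : ℕ => q ^ m) (1 - q)⁻¹ :=
    hasSum_geometric_of_lt_one hq0'.le hq1'
  -- weights
  have hw : HasSum (fun j : Fin 3 => (![4, 3, 2] j : ℝ)) 9 := by
    have := hasSum_fintype (fun j : Fin 3 => (![4, 3, 2] j : ℝ))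
    convert this using 1
    simp [Fin.sum_univ_three]
    norm_num
  -- tail formula
  have tail : ∀ n : ℕ, 1 ≤ n →
      HasSum (fun k : ℕ => a (3 * n + 1 + k)) (9 * q ^ (n + 1) * (1 - q)⁻¹) := by
    intro n hn
    have hmul : HasSum (fun p : ℕ × Fin 3 => q ^ p.1 * (![4, 3, 2] p.2 : ℝ))
        ((1 - q)⁻¹ * 9) := by
      refine hgeo.mul hw ?_
      exact Summable.mul_of_nonneg hgeo.summable hw.summable
        (fun m => by positivity) (fun j => by fin_cases j <;> norm_num)
    have hmul2 : HasSum (fun p : ℕ × Fin 3 => q ^ (n + 1) * (q ^ p.1 * (![4, 3, 2] p.2 : ℝ)))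
        (q ^ (n + 1) * ((1 - q)⁻¹ * 9)) := hmul.mul_left _
    have key : ∀ p : ℕ × Fin 3,
        q ^ (n + 1) * (q ^ p.1 * (![4, 3, 2] p.2 : ℝ)) = a (3 * n + 1 + (p.1 * 3 + (p.2 : ℕ))) := by
      rintro ⟨m, j⟩
      fin_cases j
      · have hidx : 3 * n + 1 + (m * 3 + 0) = 3 * (n + m + 1) - 2 := by omega
        rw [hidx, h1 (n + m + 1) (by omega)]
        simp [← pow_add]
        ring_nf
      · have hidx : 3 * n + 1 + (m * 3 + 1) = 3 * (n + m + 1) - 1 := by omega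
        rw [hidx, h2 (n + m + 1) (by omega)]
        simp [← pow_add]
        ring_nf
      · have hidx : 3 * n + 1 + (m * 3 + 2) = 3 * (n + m + 1) := by omega
        rw [hidx, h3 (n + m + 1) (by omega)]
        simp [← pow_add]
        ring_nf
    have hcomp : HasSum ((fun k : ℕ => a (3 * n + 1 + k)) ∘ (Nat.divModEquiv 3).symm)
        (q ^ (n + 1) * ((1 - q)⁻¹ * 9)) := by
      have : ((fun k : ℕ => a (3 * n + 1 + k)) ∘ (Nat.divModEquiv 3).symm)
          = fun p : ℕ × Fin 3 => q ^ (n + 1) * (q ^ p.1 * (![4, 3, 2] p.2 : ℝ)) := by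
        funext p
        simp [Nat.divModEquiv, key p]
      rw [this]
      exact hmul2
    have := ((Nat.divModEquiv 3).symm.hasSum_iff).mp hcomp
    convert this using 1
    ring
  intro n hn
  have T1 := tail n hn
  have hT1 : (∑' k : ℕ, a (3 * n + 1 + k)) = 9 * q ^ (n + 1) * (1 - q)⁻¹ := T1.tsum_eq
  -- second sum
  have T2 : HasSum (fun k : ℕ => a (3 * n + k))
      (9 * q ^ (n + 1) * (1 - q)⁻¹ + 2 * q ^ n) := by
    have hshift : (fun k : ℕ => a (3 * n + (k + 1))) = fun k : ℕ => a (3 * n + 1 + k) := by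
      funext k; congr 1; omega
    have := (hasSum_nat_add_iff (f := fun k : ℕ => a (3 * n + k)) 1).mp (by rw [hshift] at *; exact T1)
    simpa [h3 n hn] using this
  -- third sum
  have T3 : HasSum (fun k : ℕ => a (3 * n - 1 + k))
      (9 * q ^ (n + 1) * (1 - q)⁻¹ + (a (3 * n - 1) + a (3 * n))) := by
    have hshift : (fun k : ℕ => a (3 * n - 1 + (k + 2))) = fun k : ℕ => a (3 * n + 1 + k) := by
      funext k; congr 1; omega
    have := (hasSum_nat_add_iff (f := fun k : ℕ => a (3 * n - 1 + k)) 2).mp (by rw [hshift] at *; exact T1)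
    have e1 : 3 * n - 1 + 0 = 3 * n - 1 := by omega
    have e2 : 3 * n - 1 + 1 = 3 * n := by omega
    simpa [Finset.sum_range_succ, e1, e2] using this
  have hqn : 0 < q ^ n := pow_pos hq0' n
  have hpow : q ^ (n + 1) = q ^ n * q := pow_succ q n
  refine ⟨?_, ?_, ?_⟩
  · rw [hT1, h3 n hn, hpow]
    nlinarith [mul_pos (mul_pos hcpos hqn) (show (0:ℝ) < 2 - 11 * q by linarith)]
  · rw [T2.tsum_eq, h2 n hn, hpow]
    nlinarith [mul_pos (mul_pos hcpos hqn) (show (0:ℝ) < 10 * q - 1 by linarith)]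
  · rw [T3.tsum_eq, h1 n hn, h2 n hn, h3 n hn, hpow]
    nlinarith [mul_pos (mul_pos hcpos hqn) hq0']
end

section
/- Consider the sequence a_{3n-2} = (1/2)\cdot 8^{1-n}, a_{3n-1} = (3/8)\cdot 8^{1-n}, a_{3n} = (1/4)\cdot 8^{1-n} (i.e., the multigeometric sequence (4,3,2;1/8) up to scaling). Then a_n > r_n if and only if 3 | n, where r_n is the n-th remainder. -/
/-- For the sequence `(4,3,2;1/8)` scaled so that `a_1 = 1/2`, `a_2 = 3/8`, `a_3 = 1/4`,
i.e. `a (3n-2) = (1/2)·8^{1-n}`, `a (3n-1) = (3/8)·8^{1-n}`, `a (3n) = (1/4)·8^{1-n}`,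
we have `a n > r n` if and only if `3 ∣ n`. -/
theorem stmt13 (a : ℕ → ℝ) (hsum : Summable a)
    (h1 : ∀ n : ℕ, 1 ≤ n → a (3 * n - 2) = (1/2) * (1/8 : ℝ) ^ (n - 1))
    (h2 : ∀ n : ℕ, 1 ≤ n → a (3 * n - 1) = (3/8) * (1/8 : ℝ) ^ (n - 1))
    (h3 : ∀ n : ℕ, 1 ≤ n → a (3 * n) = (1/4) * (1/8 : ℝ) ^ (n - 1)) :
    ∀ n : ℕ, 1 ≤ n → (a n > ∑' k : ℕ, a (n + 1 + k) ↔ 3 ∣ n) := by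
  have h1' : ∀ j : ℕ, a (3 * j + 1) = (1/2) * (1/8 : ℝ) ^ j := by
    intro j
    have := h1 (j + 1) (by omega)
    simpa [show 3 * (j + 1) - 2 = 3 * j + 1 by omega] using this
  have h2' : ∀ j : ℕ, a (3 * j + 2) = (3/8) * (1/8 : ℝ) ^ j := by
    intro j
    have := h2 (j + 1) (by omega)
    simpa [show 3 * (j + 1) - 1 = 3 * j + 2 by omega] using this
  have h3' : ∀ j : ℕ, a (3 * j + 3) = (1/4) * (1/8 : ℝ) ^ j := by
    intro j
    have := h3 (j + 1) (by omega)
    simpa [show 3 * (j + 1) = 3 * j + 3 by omega] using this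
  have hstep : ∀ m : ℕ, 1 ≤ m → a (m + 3) = a m / 8 := by
    intro m hm
    obtain ⟨j, hj⟩ : ∃ j, m = 3 * j + 1 ∨ m = 3 * j + 2 ∨ m = 3 * j + 3 :=
      ⟨(m - 1) / 3, by omega⟩
    rcases hj with hj | hj | hj
    · rw [hj, show 3 * j + 1 + 3 = 3 * (j + 1) + 1 by ring, h1' (j + 1), h1' j, pow_succ]
      ring
    · rw [hj, show 3 * j + 2 + 3 = 3 * (j + 1) + 2 by ring, h2' (j + 1), h2' j, pow_succ]
      ring
    · rw [hj, show 3 * j + 3 + 3 = 3 * (j + 1) + 3 by ring, h3' (j + 1), h3' j, pow_succ]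
      ring
  -- tail sums
  have hsummable : ∀ n : ℕ, Summable (fun k => a (n + 1 + k)) := by
    intro n
    have := (summable_nat_add_iff (n + 1)).2 hsum
    exact this.congr (fun k => by rw [add_comm])
  have htail : ∀ n : ℕ, 1 ≤ n →
      (∑' k : ℕ, a (n + 1 + k)) = 8/7 * (a (n+1) + a (n+2) + a (n+3)) := by
    intro n hn
    set S := ∑' k : ℕ, a (n + 1 + k) with hS
    have hs3 : Summable (fun k => a (n + 1 + (k + 3))) :=
      (hsummable (n + 3)).congr (fun k => by ring_nf)
    have hsplit := Summable.sum_add_tsum_nat_add' (f := fun k => a (n + 1 + k)) (k := 3) hs3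
    have hshift : (∑' k : ℕ, a (n + 1 + (k + 3))) = S / 8 := by
      have : ∀ k : ℕ, a (n + 1 + (k + 3)) = a (n + 1 + k) / 8 := by
        intro k
        rw [show n + 1 + (k + 3) = (n + 1 + k) + 3 by ring]
        exact hstep _ (by omega)
      calc (∑' k : ℕ, a (n + 1 + (k + 3))) = ∑' k : ℕ, a (n + 1 + k) / 8 :=
            tsum_congr this
        _ = S / 8 := by rw [tsum_div_const]
    rw [hshift] at hsplit
    have hfin : (∑ i ∈ Finset.range 3, a (n + 1 + i)) = a (n+1) + a (n+2) + a (n+3) := by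
      simp [Finset.sum_range_succ]
    rw [hfin] at hsplit
    linarith
  intro n hn
  have hq : ∀ j : ℕ, (0:ℝ) < (1/8 : ℝ) ^ j := fun j => pow_pos (by norm_num) j
  obtain ⟨j, hj⟩ : ∃ j, n = 3 * j + 1 ∨ n = 3 * j + 2 ∨ n = 3 * j + 3 :=
    ⟨(n - 1) / 3, by omega⟩
  have ht := htail n hn
  rcases hj with hj | hj | hj
  · subst hj
    have e1 : a (3 * j + 1 + 1) = (3/8) * (1/8:ℝ) ^ j := by
      rw [show 3 * j + 1 + 1 = 3 * j + 2 by ring]; exact h2' j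
    have e2 : a (3 * j + 1 + 2) = (1/4) * (1/8:ℝ) ^ j := by
      rw [show 3 * j + 1 + 2 = 3 * j + 3 by ring]; exact h3' j
    have e3 : a (3 * j + 1 + 3) = (1/2) * (1/8:ℝ) ^ (j+1) := by
      rw [show 3 * j + 1 + 3 = 3 * (j+1) + 1 by ring]; exact h1' (j+1)
    rw [ht, e1, e2, e3, h1' j]
    constructor
    · intro h
      exfalso
      have := hq j
      rw [pow_succ] at h
      nlinarith
    · intro h; omega
  · subst hj
    have e1 : a (3 * j + 2 + 1) = (1/4) * (1/8:ℝ) ^ j := by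
      rw [show 3 * j + 2 + 1 = 3 * j + 3 by ring]; exact h3' j
    have e2 : a (3 * j + 2 + 2) = (1/2) * (1/8:ℝ) ^ (j+1) := by
      rw [show 3 * j + 2 + 2 = 3 * (j+1) + 1 by ring]; exact h1' (j+1)
    have e3 : a (3 * j + 2 + 3) = (3/8) * (1/8:ℝ) ^ (j+1) := by
      rw [show 3 * j + 2 + 3 = 3 * (j+1) + 2 by ring]; exact h2' (j+1)
    rw [ht, e1, e2, e3, h2' j]
    constructor
    · intro h
      exfalso
      have := hq j
      rw [pow_succ] at h
      nlinarith
    · intro h; omega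
  · subst hj
    have e1 : a (3 * j + 3 + 1) = (1/2) * (1/8:ℝ) ^ (j+1) := by
      rw [show 3 * j + 3 + 1 = 3 * (j+1) + 1 by ring]; exact h1' (j+1)
    have e2 : a (3 * j + 3 + 2) = (3/8) * (1/8:ℝ) ^ (j+1) := by
      rw [show 3 * j + 3 + 2 = 3 * (j+1) + 2 by ring]; exact h2' (j+1)
    have e3 : a (3 * j + 3 + 3) = (1/4) * (1/8:ℝ) ^ (j+1) := by
      rw [show 3 * j + 3 + 3 = 3 * (j+1) + 3 by ring]; exact h3' (j+1)
    rw [ht, e1, e2, e3, h3' j]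
    constructor
    · intro _; omega
    · intro _
      have := hq j
      rw [pow_succ]
      nlinarith
end

section
/- Let (a_n) be defined by a_1 = 3/4, a_{2n} = (1/2)\cdot 4^{1-n}, a_{2n+1} = (3/4)\cdot 4^{-n} (the Guthrie–Nymann sequence (3,2;1/4)). Then a_n > r_n if and only if n is even, where r_n = \sum_{k>n} a_k. -/
/-- For the Guthrie–Nymann sequence `(3,2;1/4)`: `a 1 = 3/4`, `a (2n) = (1/2)·4^{1-n}`,
`a (2n+1) = (3/4)·4^{-n}`. Then `a n > r n` if and only if `n` is even. -/
theorem stmt14 (a : ℕ → ℝ) (hsum : Summable a)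
    (h1 : a 1 = 3/4)
    (h2 : ∀ n : ℕ, 1 ≤ n → a (2 * n) = (1/2) * (1/4 : ℝ) ^ (n - 1))
    (h3 : ∀ n : ℕ, 1 ≤ n → a (2 * n + 1) = (3/4) * (1/4 : ℝ) ^ n) :
    ∀ n : ℕ, 1 ≤ n → (a n > ∑' k : ℕ, a (n + 1 + k) ↔ Even n) := by
  have h3' : ∀ n : ℕ, a (2 * n + 1) = (3/4) * (1/4 : ℝ) ^ n := by
    intro n
    rcases Nat.eq_zero_or_pos n with h | h
    · simp [h, h1]
    · exact h3 n h
  have hgeo : ∑' j : ℕ, (1/4 : ℝ) ^ j = 4/3 := by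
    rw [tsum_geometric_of_lt_one (by norm_num) (by norm_num)]
    norm_num
  have hgs : Summable (fun j : ℕ => (1/4 : ℝ) ^ j) :=
    summable_geometric_of_lt_one (by norm_num) (by norm_num)
  have hshift : ∀ c : ℕ, Summable (fun k : ℕ => a (c + k)) := by
    intro c
    exact hsum.comp_injective (fun x y h => by omega)
  -- tail sum starting at index 2m
  have hA : ∀ m : ℕ, 1 ≤ m → ∑' k : ℕ, a (2*m + k) = (11/12) * (1/4 : ℝ) ^ (m-1) := by
    intro m hm
    have he : (fun j : ℕ => a (2*m + 2*j)) = fun j => ((1/2) * (1/4:ℝ)^(m-1)) * (1/4)^j := by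
      funext j
      have e1 : 2*m + 2*j = 2*(m+j) := by ring
      have e2 : m + j - 1 = (m-1) + j := by omega
      rw [e1, h2 (m+j) (by omega), e2, pow_add]; ring
    have ho : (fun j : ℕ => a (2*m + (2*j+1))) = fun j => ((3/4) * (1/4:ℝ)^m) * (1/4)^j := by
      funext j
      have e1 : 2*m + (2*j+1) = 2*(m+j) + 1 := by ring
      rw [e1, h3' (m+j), pow_add]; ring
    have hse : Summable (fun j : ℕ => a (2*m + 2*j)) := by
      rw [he]; exact hgs.mul_left _
    have hso : Summable (fun j : ℕ => a (2*m + (2*j+1))) := by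
      rw [ho]; exact hgs.mul_left _
    have := tsum_even_add_odd (f := fun k => a (2*m + k)) hse hso
    rw [← this, he, ho, tsum_mul_left, tsum_mul_left, hgeo]
    have hm1 : m = (m-1) + 1 := by omega
    rw [hm1, pow_succ]
    ring_nf
    have e : 1 + (m-1) - 1 = m - 1 := by omega
    rw [e]; ring
  have hpos : ∀ m : ℕ, (0:ℝ) < (1/4:ℝ)^(m-1) := fun m => by positivity
  -- tail sum starting at index 2m+1
  have hB : ∀ m : ℕ, 1 ≤ m → ∑' k : ℕ, a (2*m + 1 + k) = (5/12) * (1/4 : ℝ) ^ (m-1) := by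
    intro m hm
    have hp := Summable.tsum_eq_zero_add (f := fun k => a (2*m + k)) (hshift (2*m))
    simp only [add_zero] at hp
    have hrw : (fun k : ℕ => a (2*m + (k+1))) = fun k => a (2*m + 1 + k) := by
      funext k; congr 1; omega
    rw [hrw] at hp
    have := hA m hm
    rw [hp, h2 m hm] at this
    linarith
  intro n hn
  rcases Nat.even_or_odd n with ⟨m, hme⟩ | ⟨m, hmo⟩
  · -- n = 2m even
    have hm : 1 ≤ m := by omega
    have hrw : (fun k : ℕ => a (n + 1 + k)) = fun k => a (2*m + 1 + k) := by
      funext k; congr 1; omega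
    rw [hrw, hB m hm]
    constructor
    · intro _; exact ⟨m, hme⟩
    · intro _
      have hne : n = 2*m := by omega
      rw [hne, h2 m hm]
      nlinarith [hpos m]
  · -- n = 2m+1 odd
    have hrw : (fun k : ℕ => a (n + 1 + k)) = fun k => a (2*(m+1) + k) := by
      funext k; congr 1; omega
    rw [hrw, hA (m+1) (by omega)]
    simp only [Nat.add_sub_cancel]
    constructor
    · intro hgt
      exfalso
      have hne : n = 2*m+1 := by omega
      rw [hne, h3' m] at hgt
      have : (0:ℝ) < (1/4:ℝ)^m := by positivity
      nlinarith
    · intro hev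
      exfalso
      rw [hmo] at hev
      exact (Nat.even_add_one.mp hev) (even_two_mul m)
end

section
/- (Kakeya) Let (a_n) be a nonincreasing sequence of positive reals with convergent sum and suppose a_n > r_n for all n, where r_n = \sum_{k>n} a_k. Then the achievement set E = {\sum_{n\in A} a_n : A \subseteq \mathbb{N}} has empty interior. -/
open Finset Filter Topology

/-- (Kakeya) If `(a n)` is a nonincreasing sequence of positive reals with convergent sum
and `a n > r n` for all `n`, then the achievement set has empty interior. -/
theorem stmt18 (a : ℕ → ℝ) (hpos : ∀ n, 0 < a n) (hmono : Antitone a) (hsum : Summable a)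
    (h : ∀ n : ℕ, (∑' k : ℕ, a (n + 1 + k)) < a n) :
    interior {x : ℝ | ∃ A : Set ℕ, x = ∑' n : A, a n} = ∅ := by
  classical
  set r : ℕ → ℝ := fun n => ∑' k : ℕ, a (n + 1 + k) with hrdef
  have hsum_shift : ∀ m : ℕ, Summable fun k => a (m + k) := fun m =>
    ((summable_nat_add_iff m).2 hsum).congr (fun k => by rw [add_comm])
  have hrnonneg : ∀ n, 0 ≤ r n := fun n => tsum_nonneg fun k => (hpos _).le
  -- tail splitting
  have tail_eq : ∀ k n : ℕ, k ≤ n →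
      r k = (∑ i ∈ Finset.Ico (k+1) (n+1), a i) + r n := by
    intro k n hkn
    have h1 := Summable.sum_add_tsum_nat_add (f := fun i => a (k+1+i)) (n - k) (hsum_shift (k+1))
    beta_reduce at h1
    have h2 : (∑' i : ℕ, a (k+1+(i+(n-k)))) = r n := by
      apply tsum_congr; intro i; congr 1; omega
    have h3 : (∑ i ∈ Finset.Ico (k+1) (n+1), a i) = ∑ i ∈ Finset.range (n-k), a (k+1+i) := by
      rw [Finset.sum_Ico_eq_sum_range, Nat.succ_sub_succ]
    rw [h2] at h1
    show (∑' k' : ℕ, a (k+1+k')) = _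
    rw [h3, h1]
  -- separation of distinct finite subsums
  have hsep : ∀ n : ℕ, ∀ G G' : Finset ℕ, G ⊆ Finset.range (n+1) → G' ⊆ Finset.range (n+1) →
      G ≠ G' → r n < |(∑ i ∈ G, a i) - ∑ i ∈ G', a i| := by
    intro n
    have main : ∀ G G' : Finset ℕ, G ⊆ Finset.range (n+1) → G' ⊆ Finset.range (n+1) →
        ∀ k, k ∈ G → k ∉ G' → (∀ j ∈ G', j ∉ G → k < j) →
        r n < (∑ i ∈ G, a i) - ∑ i ∈ G', a i := by
      intro G G' hG hG' k hkG hkG' hmin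
      have hkn : k ≤ n := by have := hG hkG; simp [Finset.mem_range] at this; omega
      have hdiff : (∑ i ∈ G, a i) - (∑ i ∈ G', a i)
          = (∑ i ∈ G \ G', a i) - ∑ i ∈ G' \ G, a i := by
        have e1 : (∑ i ∈ G ∩ G', a i) + (∑ i ∈ G \ G', a i) = ∑ i ∈ G, a i :=
          Finset.sum_inter_add_sum_sdiff G G' a
        have e2 : (∑ i ∈ G' ∩ G, a i) + (∑ i ∈ G' \ G, a i) = ∑ i ∈ G', a i :=
          Finset.sum_inter_add_sum_sdiff G' G a
        rw [Finset.inter_comm] at e2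
        linarith
      have h1 : a k ≤ ∑ i ∈ G \ G', a i :=
        Finset.single_le_sum (fun i _ => (hpos i).le) (Finset.mem_sdiff.2 ⟨hkG, hkG'⟩)
      have h2 : (∑ i ∈ G' \ G, a i) ≤ ∑ i ∈ Finset.Ico (k+1) (n+1), a i := by
        apply Finset.sum_le_sum_of_subset_of_nonneg
        · intro j hj
          rw [Finset.mem_sdiff] at hj
          have hjk := hmin j hj.1 hj.2
          have := hG' hj.1
          simp only [Finset.mem_range] at this
          simp only [Finset.mem_Ico]
          omega
        · intro i _ _; exact (hpos i).le
      have h3 := tail_eq k n hkn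
      have h4 := h k
      linarith [hdiff, h1, h2]
    intro G G' hG hG' hne
    have hD : ((G \ G') ∪ (G' \ G)).Nonempty := by
      rw [Finset.nonempty_iff_ne_empty]
      intro hc
      rw [Finset.union_eq_empty] at hc
      exact hne (Finset.Subset.antisymm
        (Finset.sdiff_eq_empty_iff_subset.1 hc.1) (Finset.sdiff_eq_empty_iff_subset.1 hc.2))
    set k := ((G \ G') ∪ (G' \ G)).min' hD with hk
    have hkmem := Finset.min'_mem _ hD
    have hkmin : ∀ j ∈ (G \ G') ∪ (G' \ G), k ≤ j := fun j hj => Finset.min'_le _ j hj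
    rw [Finset.mem_union, Finset.mem_sdiff, Finset.mem_sdiff] at hkmem
    rcases hkmem with ⟨h1, h2⟩ | ⟨h1, h2⟩
    · have := main G G' hG hG' k h1 h2 (fun j hj hj' => by
        have := hkmin j (Finset.mem_union_right _ (Finset.mem_sdiff.2 ⟨hj, hj'⟩))
        rcases lt_or_eq_of_le this with hlt | heq
        · exact hlt
        · exact absurd (heq ▸ h1) hj')
      calc r n < _ := this
      _ ≤ _ := le_abs_self _
    · have := main G' G hG' hG k h1 h2 (fun j hj hj' => by
        have := hkmin j (Finset.mem_union_left _ (Finset.mem_sdiff.2 ⟨hj, hj'⟩))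
        rcases lt_or_eq_of_le this with hlt | heq
        · exact hlt
        · exact absurd (heq ▸ h1) hj')
      rw [abs_sub_comm]
      calc r n < _ := this
      _ ≤ _ := le_abs_self _
  -- covering lemma
  have hcover : ∀ n : ℕ, ∀ y ∈ {x : ℝ | ∃ A : Set ℕ, x = ∑' n : A, a n},
      ∃ G : Finset ℕ, G ⊆ Finset.range (n+1) ∧
        (∑ i ∈ G, a i) ≤ y ∧ y ≤ (∑ i ∈ G, a i) + r n := by
    rintro n y ⟨A, hy⟩
    have hind : Summable (A.indicator a) := hsum.indicator A
    have hy2 : y = ∑' i, A.indicator a i := by rw [hy, _root_.tsum_subtype]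
    have hsplit := Summable.sum_add_tsum_nat_add (f := A.indicator a) (n+1) hind
    have e1 : (∑ i ∈ (Finset.range (n+1)).filter (· ∈ A), a i)
        = ∑ i ∈ Finset.range (n+1), A.indicator a i := by
      rw [Finset.sum_filter]
      exact Finset.sum_congr rfl fun i _ => by simp [Set.indicator_apply]
    have tl_nonneg : 0 ≤ ∑' i, A.indicator a (i + (n+1)) :=
      tsum_nonneg fun i => Set.indicator_nonneg (fun j _ => (hpos j).le) _
    have tl_le : (∑' i, A.indicator a (i + (n+1))) ≤ r n := by
      refine Summable.tsum_le_tsum (fun i => ?_) ((summable_nat_add_iff (n+1)).2 hind)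
        ((hsum_shift (n+1)).congr fun k => by rw [add_comm (n+1) k])
      calc A.indicator a (i + (n+1)) ≤ a (i + (n+1)) :=
            Set.indicator_le_self' (fun j _ => (hpos j).le) _
        _ = a (n + 1 + i) := by rw [add_comm]
    exact ⟨(Finset.range (n+1)).filter (· ∈ A), Finset.filter_subset _ _,
      by linarith [hsplit, hy2.le], by linarith [hsplit, hy2.le]⟩
  -- main argument
  rw [Set.eq_empty_iff_forall_notMem]
  intro x hx
  obtain ⟨ε, εpos, hball⟩ := Metric.mem_nhds_iff.1 (mem_interior_iff_mem_nhds.1 hx)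
  have hr0 : Tendsto r atTop (𝓝 0) := by
    have h1 : Tendsto (fun n : ℕ => ∑' k, a (k + (n+1))) atTop (𝓝 (0:ℝ)) :=
      (tendsto_sum_nat_add a).comp (tendsto_add_atTop_nat 1)
    exact h1.congr fun n => tsum_congr fun k => by rw [add_comm]
  obtain ⟨n, hn⟩ := (hr0.eventually (gt_mem_nhds εpos)).exists
  have hxE : x ∈ {x : ℝ | ∃ A : Set ℕ, x = ∑' n : A, a n} :=
    hball (Metric.mem_ball_self εpos)
  obtain ⟨G0, hG0, ht1, ht2⟩ := hcover n x hxE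
  set t := ∑ i ∈ G0, a i with htdef
  set c := t + r n with hc
  set T := ((Finset.range (n+1)).powerset.image fun G => ∑ i ∈ G, a i) with hT
  set S := insert (x + ε) (T.filter fun u => c < u) with hS
  have hSne : (x + ε) ∈ S := Finset.mem_insert_self _ _
  set m := S.min' ⟨_, hSne⟩ with hm
  have hcm : c < m := by
    rw [hm]; refine (Finset.lt_min'_iff _ _).2 ?_
    intro y hy
    rw [hS, Finset.mem_insert] at hy
    rcases hy with rfl | hy
    · linarith
    · exact (Finset.mem_filter.1 hy).2
  have hmle : m ≤ x + ε := Finset.min'_le _ _ hSne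
  set z := (c + m)/2 with hz
  have hz1 : c < z := by rw [hz]; linarith
  have hz2 : z < m := by rw [hz]; linarith
  have hzball : z ∈ Metric.ball x ε := by
    rw [Real.ball_eq_Ioo]
    exact ⟨by linarith [hrnonneg n], by linarith⟩
  obtain ⟨G1, hG1, hs1, hs2⟩ := hcover n z (hball hzball)
  set t' := ∑ i ∈ G1, a i with ht'def
  by_cases hne : t' = t
  · rw [hne] at hs2; linarith
  · have hGne : G1 ≠ G0 := fun hGG => hne (by rw [ht'def, htdef, hGG])
    have hsepv := hsep n G1 G0 hG1 hG0 hGne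
    rcases abs_cases (t' - t) with ⟨he, _⟩ | ⟨he, _⟩
    · have htc : c < t' := by rw [he] at hsepv; linarith
      have hmem : t' ∈ S := by
        rw [hS]
        apply Finset.mem_insert_of_mem
        rw [Finset.mem_filter]
        exact ⟨Finset.mem_image.2 ⟨G1, Finset.mem_powerset.2 hG1, rfl⟩, htc⟩
      have := Finset.min'_le _ _ hmem
      linarith
    · rw [he] at hsepv
      linarith
end

section
/- (Kakeya) Let (a_n) be a nonincreasing sequence of positive reals with convergent sum and suppose a_n \le r_n for all n, where r_n = \sum_{k>n} a_k. Then the achievement set E(a_n) equals the interval [0, \sum_n a_n]. -/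
open Classical in
/-- (Kakeya) If `(a n)` is a nonincreasing sequence of positive reals with convergent sum
and `a n ≤ r n` for all `n`, then the achievement set equals `[0, ∑ a n]`. -/
theorem stmt19 (a : ℕ → ℝ) (hpos : ∀ n, 0 < a n) (hmono : Antitone a) (hsum : Summable a)
    (h : ∀ n : ℕ, a n ≤ ∑' k : ℕ, a (n + 1 + k)) :
    {x : ℝ | ∃ A : Set ℕ, x = ∑' n : A, a n} = Set.Icc 0 (∑' n, a n) := by
  have ha : ∀ n, 0 ≤ a n := fun n => (hpos n).le
  ext x
  simp only [Set.mem_setOf_eq, Set.mem_Icc]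
  constructor
  · rintro ⟨A, rfl⟩
    rw [tsum_subtype]
    constructor
    · exact tsum_nonneg fun n => Set.indicator_nonneg (fun n _ => ha n) n
    · exact Summable.tsum_le_tsum (Set.indicator_le_self' (fun n _ => ha n)) (hsum.indicator A) hsum
  · rintro ⟨hx0, hxS⟩
    -- tails
    set t : ℕ → ℝ := fun n => ∑' k, a (n + k) with ht
    have htrec : ∀ n, t n = a n + t (n + 1) := by
      intro n
      have hs : Summable (fun k => a (n + k)) := by
        have := (summable_nat_add_iff n).2 hsum
        simpa [add_comm] using this
      have h1 : t n = a (n + 0) + ∑' k, a (n + (k + 1)) := Summable.tsum_eq_zero_add hs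
      have h2 : (fun k => a (n + (k + 1))) = fun k => a (n + 1 + k) := by
        funext k; congr 1; omega
      rw [h1, h2]; simp [ht]
    have ht0 : t 0 = ∑' n, a n := by
      simp only [ht, zero_add]
    have htail : ∀ n, t n = (∑' m, a m) - ∑ k ∈ Finset.range n, a k := by
      intro n
      have := Summable.sum_add_tsum_nat_add (f := a) n hsum
      have h2 : t n = ∑' k, a (k + n) := by
        apply tsum_congr; intro k; congr 1; omega
      rw [h2]; linarith
    have htlim : Filter.Tendsto t Filter.atTop (nhds 0) := by
      have hps : Filter.Tendsto (fun n => ∑ k ∈ Finset.range n, a k)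
          Filter.atTop (nhds (∑' m, a m)) := hsum.hasSum.tendsto_sum_nat
      have : Filter.Tendsto (fun n => (∑' m, a m) - ∑ k ∈ Finset.range n, a k)
          Filter.atTop (nhds ((∑' m, a m) - (∑' m, a m))) :=
        Filter.Tendsto.const_sub _ hps
      simpa [funext htail] using this
    -- greedy partial sums
    set s : ℕ → ℝ := fun n =>
      Nat.rec (0 : ℝ) (fun m sm => sm + if sm + a m ≤ x then a m else 0) n with hsdef
    have hsrec : ∀ n, s (n + 1) = s n + if s n + a n ≤ x then a n else 0 := fun n => rfl
    have hs0 : s 0 = 0 := rfl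
    have key : ∀ n, s n ≤ x ∧ x - s n ≤ t n := by
      intro n
      induction n with
      | zero => rw [hs0, ht0]; exact ⟨hx0, by linarith⟩
      | succ m ih =>
        by_cases hc : s m + a m ≤ x
        · have hsm : s (m + 1) = s m + a m := by rw [hsrec, if_pos hc]
          have hrec := htrec m
          exact ⟨by rw [hsm]; exact hc, by rw [hsm]; linarith [ih.2]⟩
        · have hsm : s (m + 1) = s m := by rw [hsrec, if_neg hc]; ring
          push_neg at hc
          have hm := h m
          have : t (m + 1) = ∑' k, a (m + 1 + k) := rfl
          exact ⟨by rw [hsm]; exact ih.1, by rw [hsm]; linarith⟩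
    have hslim : Filter.Tendsto s Filter.atTop (nhds x) := by
      have hz : Filter.Tendsto (fun n => x - s n) Filter.atTop (nhds 0) := by
        apply squeeze_zero (fun n => by linarith [(key n).1]) (fun n => (key n).2) htlim
      have := Filter.Tendsto.const_sub x hz
      simpa using this
    -- the achieving set
    refine ⟨{n | s n + a n ≤ x}, ?_⟩
    set A : Set ℕ := {n | s n + a n ≤ x} with hA
    set b : ℕ → ℝ := A.indicator a with hb
    have hbn : ∀ n, b n = if s n + a n ≤ x then a n else 0 := by
      intro n
      simp [hb, Set.indicator_apply, hA, Set.mem_setOf_eq]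
    have hsum_b : Summable b := hsum.indicator A
    have hsb : ∀ n, s n = ∑ k ∈ Finset.range n, b k := by
      intro n
      induction n with
      | zero => simp [hs0]
      | succ m ih => rw [Finset.sum_range_succ, ← ih, hsrec, hbn]
    have hps : Filter.Tendsto (fun n => ∑ k ∈ Finset.range n, b k)
        Filter.atTop (nhds (∑' k, b k)) := hsum_b.hasSum.tendsto_sum_nat
    have hbx : (∑' k, b k) = x := by
      have := hslim
      rw [funext hsb] at this
      exact tendsto_nhds_unique hps this
    rw [tsum_subtype]
    exact hbx.symm
end
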